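/- Let ω be a prime with ω ≡ 5 (mod 6), δ ∈ ℤ, and n ≥ 1. Then p_{δω-4}(nω - (ω+1)/6) ≡ 0 (mod ω), where p_k(n) is the coefficient of qⁿ in (q;q)_∞^{-k}. -/

import Mathlib

section EulerDev
open Polynomial Finset

/-! ### Integer triangle numbers -/

def trz (k : ℤ) : ℤ := k * (k + 1) / 2

lemma trz_eq (k : ℤ) : 2 * trz k = k * (k + 1) := by
  have h : Even (k * (k + 1)) := Int.even_mul_succ_self k
  obtain ⟨c, hc⟩ := h
  rw [trz, hc]
  omega

lemma trz_nonneg (k : ℤ) : 0 ≤ trz k := by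
  have h : 0 ≤ k * (k + 1) := by
    rcases le_or_gt 0 k with h | h
    · positivity
    · nlinarith
  have := trz_eq k
  omega

lemma trz_succ (k : ℤ) : trz k = trz (k - 1) + k := by
  have h1 := trz_eq k
  have h2 := trz_eq (k - 1)
  have : 2 * trz k = 2 * (trz (k-1) + k) := by ring_nf; ring_nf at h1 h2; omega
  omega

lemma trz_neg (k : ℤ) : trz (-k - 1) = trz k := by
  have h1 := trz_eq k
  have h2 := trz_eq (-k - 1)
  have : 2 * trz (-k-1) = 2 * trz k := by ring_nf; ring_nf at h1 h2; omega
  omega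

/-- `triZ m N = T_{m - N - 1}` where `T` is the (symmetric) integer triangle number. -/
def triZ (m N : ℕ) : ℕ := (trz ((m : ℤ) - N - 1)).toNat

lemma triZ_cast (m N : ℕ) : (triZ m N : ℤ) = trz ((m : ℤ) - N - 1) :=
  Int.toNat_of_nonneg (trz_nonneg _)

lemma triZ_a (j N : ℕ) (hj : 1 ≤ j) : triZ j (N + 1) = triZ (j - 1) N := by
  unfold triZ
  congr 2
  have : ((j - 1 : ℕ) : ℤ) = (j : ℤ) - 1 := by omega
  rw [this]; push_cast; ring

lemma triZ_b (j N : ℕ) : triZ j (N + 1) + j = N + 1 + triZ j N := by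
  have h1 := triZ_cast j (N + 1)
  have h2 := triZ_cast j N
  have h3 : trz ((j:ℤ) - N - 1) = trz ((j:ℤ) - (N+1) - 1) + ((j:ℤ) - N - 1) := by
    have := trz_succ ((j:ℤ) - N - 1)
    have harg : (j:ℤ) - N - 1 - 1 = (j:ℤ) - (N+1) - 1 := by ring
    rw [harg] at this; exact this
  push_cast at h1 h2
  omega

lemma triZ_c (j N : ℕ) (hj : 2 ≤ j) (hj2 : j ≤ 2*N+3) :
    triZ j (N + 1) + (2*N+3-j) = N + 1 + triZ (j - 2) N := by
  have h1 := triZ_cast j (N + 1)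
  have h2 := triZ_cast (j-2) N
  have harg : ((j - 2 : ℕ) : ℤ) - N - 1 = ((j:ℤ) - (N+1) - 1) - 1 := by omega
  rw [harg] at h2
  have h3 := trz_succ ((j:ℤ) - (N+1) - 1)
  push_cast at h1 h2
  omega

/-- triangle numbers in ℕ -/
def tk (k : ℕ) : ℕ := k * (k + 1) / 2

lemma tk_eq (k : ℕ) : 2 * tk k = k * (k+1) := by
  have : 2 ∣ k * (k+1) := (Nat.even_mul_succ_self k).two_dvd
  unfold tk; omega

lemma tk_cast (k : ℕ) : (tk k : ℤ) = trz k := by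
  have h1 := tk_eq k
  have h2 := trz_eq (k : ℤ)
  have : ((2 * tk k : ℕ) : ℤ) = (k:ℤ)*(k+1) := by push_cast [h1]; ring
  omega

lemma triZ_high (N k : ℕ) : triZ (N + 1 + k) N = tk k := by
  have h1 := triZ_cast (N+1+k) N
  have h2 := tk_cast k
  have h3 : trz (((N+1+k : ℕ):ℤ) - N - 1) = trz k := by
    have : ((N+1+k : ℕ):ℤ) - N - 1 = (k:ℤ) := by push_cast; ring
    rw [this]
  omega

lemma triZ_low (N k : ℕ) (hk : k ≤ N) : triZ (N - k) N = tk k := by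
  have h1 := triZ_cast (N-k) N
  have h2 := tk_cast k
  have h3 : ((N - k : ℕ):ℤ) - N - 1 = -(k:ℤ) - 1 := by omega
  rw [h3, trz_neg] at h1
  omega

lemma tk_strictMono : StrictMono tk := by
  have h : ∀ n, tk n < tk (n+1) := by
    intro n
    have h1 := tk_eq n; have h2 := tk_eq (n+1)
    nlinarith
  exact strictMono_nat_of_lt_succ h

lemma tk_ge_self (k : ℕ) : k ≤ tk k := by
  have := tk_eq k; nlinarith

/-! ### `poch` and Gaussian binomials -/

noncomputable def poch (n : ℕ) : Polynomial ℤ := ∏ j ∈ range n, (1 - X ^ (j+1))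

lemma poch_zero : poch 0 = 1 := by simp [poch]

lemma poch_succ (n : ℕ) : poch (n+1) = poch n * (1 - X ^ (n+1)) := by
  rw [poch, prod_range_succ, ← poch]

lemma poch_coeff_zero (n : ℕ) : (poch n).coeff 0 = 1 := by
  rw [Polynomial.coeff_zero_eq_eval_zero, poch]
  rw [Polynomial.eval_prod]
  apply Finset.prod_eq_one
  intro j _
  simp

lemma poch_ne_zero (n : ℕ) : poch n ≠ 0 := fun h => by
  have := poch_coeff_zero n; rw [h] at this; simp at this

noncomputable def gauss : ℕ → ℕ → Polynomial ℤ
  | _, 0 => 1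
  | 0, _+1 => 0
  | n+1, k+1 => gauss n k + X^(k+1) * gauss n (k+1)

@[simp] lemma gauss_zero_right (n : ℕ) : gauss n 0 = 1 := by cases n <;> rfl

lemma gauss_succ (n k : ℕ) : gauss (n+1) (k+1) = gauss n k + X^(k+1) * gauss n (k+1) := rfl

lemma gauss_eq_zero : ∀ n k, n < k → gauss n k = 0 := by
  intro n
  induction n with
  | zero => intro k hk; match k, hk with | k+1, _ => rfl
  | succ n ih =>
    intro k hk
    match k, hk with
    | k+1, hk =>
      rw [gauss_succ, ih k (by omega), ih (k+1) (by omega)]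
      ring

lemma gauss_self : ∀ n, gauss n n = 1 := by
  intro n
  induction n with
  | zero => rfl
  | succ n ih => rw [gauss_succ, ih, gauss_eq_zero n (n+1) (by omega)]; ring

lemma gauss_one (n : ℕ) : gauss n 1 = ∑ i ∈ range n, X^i := by
  induction n with
  | zero => simp [gauss_eq_zero 0 1 (by omega)]
  | succ n ih =>
    rw [gauss_succ, gauss_zero_right, ih]
    have h1 := geom_sum_succ (x := (X : Polynomial ℤ)) (n := n)
    linear_combination -h1

lemma gauss_pascal2 : ∀ n k, gauss (n+1) (k+1) = X^(n-k) * gauss n k + gauss n (k+1) := by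
  intro n
  induction n with
  | zero =>
    intro k
    cases k with
    | zero => simp [gauss_succ, gauss_eq_zero 0 1 (by omega)]
    | succ k => simp [gauss_succ, gauss_eq_zero 0 (k+1) (by omega), gauss_eq_zero 0 (k+2) (by omega),
        gauss_eq_zero 1 (k+2) (by omega)]
  | succ n ih =>
    intro k
    cases k with
    | zero =>
      rw [gauss_succ, gauss_zero_right, gauss_one]
      have h1 := geom_sum_succ (x := (X : Polynomial ℤ)) (n := n+1)
      have h2 := geom_sum_succ' (x := (X : Polynomial ℤ)) (n := n+1)
      simp only [Nat.sub_zero, pow_one]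
      linear_combination h2 - h1
    | succ k =>
      rcases Nat.lt_or_ge (n+1) (k+1) with h | h
      · rw [gauss_eq_zero (n+2) (k+2) (by omega), gauss_eq_zero (n+1) (k+1) (by omega),
          gauss_eq_zero (n+1) (k+2) (by omega)]
        ring
      · -- k ≤ n
        rcases eq_or_lt_of_le (show k ≤ n by omega) with he | hlt
        · subst he
          rw [gauss_self, gauss_self, gauss_eq_zero (k+1) (k+2) (by omega)]
          simp
        conv_lhs => rw [gauss_succ, ih k, ih (k+1)]
        conv_rhs => rw [gauss_succ n k, gauss_succ n (k+1)]
        have hxe : (k+1+1) + (n-(k+1)) = (n+1-(k+1)) + (k+1) := by omega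
        have hx : (X:Polynomial ℤ)^(k+1+1) * X^(n-(k+1)) = X^(n+1-(k+1)) * X^(k+1) := by
          rw [← pow_add, ← pow_add, hxe]
        have hx2 : (X:Polynomial ℤ)^(n+1-(k+1)) = X^(n-k) := by
          rw [show n+1-(k+1) = n-k from by omega]
        rw [hx2] at hx ⊢
        linear_combination (gauss n (k+1)) * hx

lemma gauss_poch (n : ℕ) : ∀ k, k ≤ n → gauss n k * (poch k * poch (n - k)) = poch n := by
  induction n with
  | zero => intro k hk; interval_cases k; simp [poch_zero]
  | succ n ih =>
    intro k hk
    cases k with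
    | zero => simp [poch_zero]
    | succ k =>
      rcases Nat.lt_or_ge k n with h | h
      · -- k + 1 ≤ n
        have e1 : poch (k+1) = poch k * (1 - X^(k+1)) := poch_succ k
        have e2 : n + 1 - (k+1) = n - (k+1) + 1 := by omega
        have e3 : poch (n+1-(k+1)) = poch (n-(k+1)) * (1 - X^(n-k)) := by
          rw [e2, poch_succ, show n - (k+1) + 1 = n - k from by omega]
        have e5 : poch (n-k) = poch (n-(k+1)) * (1 - X^(n-k)) := by
          rw [show n - k = n - (k+1) + 1 from by omega, poch_succ,
            show n - (k+1) + 1 = n - k from by omega]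
        have ih1 := ih k (by omega)
        have ih2 := ih (k+1) (by omega)
        have hxx : (X:Polynomial ℤ)^(k+1) * X^(n-k) = X^(n+1) := by
          rw [← pow_add]; congr 1; omega
        rw [gauss_succ, e3, poch_succ n]
        linear_combination (1-X^(k+1)) * ih1 + X^(k+1)*(1-(X:Polynomial ℤ)^(n-k)) * ih2
          + (gauss n k * poch (n-(k+1)) * (1-(X:Polynomial ℤ)^(n-k))) * e1
          + (-(gauss n k) * poch k * (1-(X:Polynomial ℤ)^(k+1))) * e5 + (-(poch n)) * hxx
      · -- k ≥ n, so k + 1 = n + 1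
        have : k = n := by omega
        subst this
        rw [gauss_self, Nat.sub_self, poch_zero]
        ring

lemma gauss_symm (n k : ℕ) (hk : k ≤ n) : gauss n k = gauss n (n - k) := by
  have h1 := gauss_poch n k hk
  have h2 := gauss_poch n (n-k) (by omega)
  rw [show n - (n-k) = k from by omega] at h2
  have h3 : gauss n k * (poch k * poch (n-k)) = gauss n (n-k) * (poch k * poch (n-k)) := by
    linear_combination h1 - h2
  have hnz : poch k * poch (n-k) ≠ 0 := mul_ne_zero (poch_ne_zero _) (poch_ne_zero _)
  exact mul_right_cancel₀ hnz h3

/-! ### low-degree equality of polynomials -/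

def lowEqP (D : ℕ) (f g : Polynomial ℤ) : Prop := ∀ d ≤ D, f.coeff d = g.coeff d

lemma lowEqP.refl (D : ℕ) (f : Polynomial ℤ) : lowEqP D f f := fun _ _ => rfl

lemma lowEqP.symm {D f g} (h : lowEqP D f g) : lowEqP D g f := fun d hd => (h d hd).symm

lemma lowEqP.trans {D f g h} (h1 : lowEqP D f g) (h2 : lowEqP D g h) : lowEqP D f h :=
  fun d hd => (h1 d hd).trans (h2 d hd)

lemma lowEqP_mul_left {D : ℕ} {f g : Polynomial ℤ} (p : Polynomial ℤ) (h : lowEqP D f g) :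
    lowEqP D (p * f) (p * g) := by
  intro d hd
  rw [Polynomial.coeff_mul, Polynomial.coeff_mul]
  apply Finset.sum_congr rfl
  intro x hx
  rw [Finset.HasAntidiagonal.mem_antidiagonal] at hx
  rw [h x.2 (by omega)]

lemma lowEqP_mul_right {D : ℕ} {f g : Polynomial ℤ} (p : Polynomial ℤ) (h : lowEqP D f g) :
    lowEqP D (f * p) (g * p) := by
  rw [mul_comm f p, mul_comm g p]; exact lowEqP_mul_left p h

lemma lowEqP_poch_ge {D : ℕ} : ∀ a, D ≤ a → lowEqP D (poch a) (poch D) := by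
  intro a
  induction a with
  | zero => intro h; rw [Nat.le_zero.mp h]; exact lowEqP.refl _ _
  | succ a ih =>
    intro h
    rcases Nat.lt_or_ge D (a+1) with h1 | h1
    · have ha : D ≤ a := by omega
      refine lowEqP.trans ?_ (ih ha)
      intro d hd
      rw [poch_succ]
      rw [mul_sub, mul_one, Polynomial.coeff_sub, Polynomial.coeff_mul_X_pow']
      rw [if_neg (by omega)]
      ring
    · have : D = a + 1 := by omega
      rw [this]; exact lowEqP.refl _ _

lemma lowEqP_poch {D a b : ℕ} (ha : D ≤ a) (hb : D ≤ b) : lowEqP D (poch a) (poch b) :=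
  (lowEqP_poch_ge a ha).trans (lowEqP_poch_ge b hb).symm

/-- The key "window" lemma: in the stable range, `gauss (2N+1) m * poch N` looks like `1`
up to degree `D`. -/
lemma windowOne {D N m : ℕ} (hm : D ≤ m) (hm2 : D + m ≤ 2*N+1) (hN : D ≤ N) :
    lowEqP D (gauss (2*N+1) m * poch N) 1 := by
  set A := gauss (2*N+1) m * poch N with hA
  have step1 : lowEqP D (A * poch N) (poch N) := by
    have e1 : A * poch N = gauss (2*N+1) m * (poch N * poch N) := by rw [hA]; ring
    have c1 : lowEqP D (poch N * poch N) (poch m * poch (2*N+1-m)) := by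
      refine lowEqP.trans (lowEqP_mul_right (poch N) (lowEqP_poch hN hm)) ?_
      exact lowEqP_mul_left (poch m) (lowEqP_poch hN (by omega))
    have c2 : lowEqP D (gauss (2*N+1) m * (poch N * poch N))
        (gauss (2*N+1) m * (poch m * poch (2*N+1-m))) := lowEqP_mul_left _ c1
    have c3 : gauss (2*N+1) m * (poch m * poch (2*N+1-m)) = poch (2*N+1) :=
      gauss_poch (2*N+1) m (by omega)
    rw [e1]
    refine c2.trans ?_
    rw [c3]
    exact lowEqP_poch (by omega) hN
  -- now extract coefficients by strong induction
  intro d hd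
  induction d using Nat.strong_induction_on with
  | _ d ihd =>
    have hconv : (A * poch N).coeff d = ∑ i ∈ range (d+1), A.coeff i * (poch N).coeff (d - i) := by
      rw [Polynomial.coeff_mul, Finset.Nat.sum_antidiagonal_eq_sum_range_succ_mk]
    rw [Finset.sum_range_succ] at hconv
    have hlow : ∀ i ∈ range d, A.coeff i * (poch N).coeff (d - i)
        = (if i = 0 then 1 else 0) * (poch N).coeff (d - i) := by
      intro i hi
      rw [Finset.mem_range] at hi
      rw [ihd i hi (by omega), Polynomial.coeff_one]
    rw [Finset.sum_congr rfl hlow] at hconv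
    have hsum : ∑ i ∈ range d, (if i = 0 then (1:ℤ) else 0) * (poch N).coeff (d - i)
        = if d = 0 then 0 else (poch N).coeff d := by
      rcases Nat.eq_zero_or_pos d with h0 | h0
      · subst h0; simp
      · rw [if_neg (by omega)]
        rw [Finset.sum_eq_single 0]
        · simp
        · intro b _ hb; rw [if_neg hb]; ring
        · intro h; exact absurd (Finset.mem_range.mpr h0) h
    rw [hsum] at hconv
    have hstep := step1 d hd
    rw [hconv] at hstep
    rcases Nat.eq_zero_or_pos d with h0 | h0
    · subst h0
      simp only [if_pos rfl, zero_add, Nat.sub_zero] at hstep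
      rw [poch_coeff_zero] at hstep
      simpa using hstep
    · rw [if_neg (by omega), Nat.sub_self, poch_coeff_zero, mul_one] at hstep
      have : A.coeff d = 0 := by linarith
      rw [this, Polynomial.coeff_one, if_neg (by omega)]

/-! ### The shifted q-binomial theorem -/

/-- coefficient of `x^m` in the two-variable identity -/
noncomputable def cq (N m : ℕ) : Polynomial ℤ := gauss (2*N+1) m * X^(triZ m N)

lemma cq_zero (N m : ℕ) (h : 2*N+2 ≤ m) : cq N m = 0 := by
  rw [cq, gauss_eq_zero (2*N+1) m (by omega)]; ring

/-- the sum side -/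
noncomputable def sGF (N : ℕ) : Polynomial (Polynomial ℤ) :=
  ∑ m ∈ range (2*N+2), C (cq N m) * X^m

lemma sGF_coeff (N j : ℕ) : (sGF N).coeff j = cq N j := by
  rw [sGF, Polynomial.finset_sum_coeff]
  have h1 : ∀ m ∈ range (2*N+2), (C (cq N m) * X^m).coeff j
      = if m = j then cq N m else 0 := by
    intro m _
    rw [Polynomial.coeff_C_mul, Polynomial.coeff_X_pow]
    by_cases h : m = j
    · rw [if_pos h, if_pos h.symm, mul_one]
    · rw [if_neg h, if_neg (fun hh => h hh.symm), mul_zero]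
  rw [Finset.sum_congr rfl h1, Finset.sum_ite_eq' (range (2*N+2)) j (fun m => cq N m)]
  by_cases hj : j ∈ range (2*N+2)
  · rw [if_pos hj]
  · rw [if_neg hj, cq_zero N j (by simpa [Finset.mem_range] using hj)]

/-- The Pascal-type step for the coefficients. -/
lemma cstep (N j : ℕ) :
    cq (N+1) j = cq N j * X^(N+1)
      + (if 1 ≤ j then cq N (j-1) + cq N (j-1) * X^(2*N+2) else 0)
      + (if 2 ≤ j then cq N (j-2) * X^(N+1) else 0) := by
  have h21 : 2*(N+1)+1 = 2*N+3 := by ring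
  match j with
  | 0 =>
    rw [if_neg (by omega), if_neg (by omega)]
    rw [cq, cq, h21, gauss_zero_right, gauss_zero_right]
    rw [show triZ 0 (N+1) = triZ 0 N + (N+1) from by have := triZ_b 0 N; omega, pow_add]
    ring
  | 1 =>
    rw [if_pos (by omega), if_neg (by omega)]
    simp only [cq, h21, show (1:ℕ)-1 = 0 from rfl, gauss_zero_right]
    have hg1 : gauss (2*N+3) 1 = gauss (2*N+2) 0 + X^1 * gauss (2*N+2) 1 := gauss_succ _ _
    have hg2 : gauss (2*N+2) 1 = X^(2*N+1-0) * gauss (2*N+1) 0 + gauss (2*N+1) 1 :=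
      gauss_pascal2 (2*N+1) 0
    have hG : gauss (2*N+3) 1 = 1 + X^(2*N+2) + X^1 * gauss (2*N+1) 1 := by
      rw [hg1, hg2, gauss_zero_right, gauss_zero_right,
        show 2*N+1-0 = 2*N+1 from rfl]
      ring
    have e0 : (X : Polynomial ℤ)^(triZ 1 (N+1)) = X^(triZ 0 N) := by
      rw [triZ_a 1 N (by omega)]
    have e2 : (X : Polynomial ℤ)^(triZ 1 (N+1)) * X^1 = X^(triZ 1 N) * X^(N+1) := by
      rw [← pow_add, ← pow_add]
      congr 1
      have := triZ_b 1 N; omega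
    linear_combination (X:Polynomial ℤ)^(triZ 1 (N+1)) * hG + gauss (2*N+1) 1 * e2
      + (1 + (X:Polynomial ℤ)^(2*N+2)) * e0
  | (j+2) =>
    rw [if_pos (by omega), if_pos (by omega)]
    simp only [cq, h21, Nat.add_sub_cancel, show j+2-1 = j+1 from by omega]
    rcases Nat.lt_or_ge (2*N+1) j with hbig | hsmall
    · -- j ≥ 2N+2 : everything vanishes
      rw [gauss_eq_zero (2*N+3) (j+2) (by omega), gauss_eq_zero (2*N+1) (j+2) (by omega),
        gauss_eq_zero (2*N+1) (j+1) (by omega), gauss_eq_zero (2*N+1) j (by omega)]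
      ring
    · -- j ≤ 2N+1
      have hg1 : gauss (2*N+3) (j+2) = gauss (2*N+2) (j+1) + X^(j+2) * gauss (2*N+2) (j+2) :=
        gauss_succ _ _
      have hg2 : gauss (2*N+2) (j+1) = X^(2*N+1-j) * gauss (2*N+1) j + gauss (2*N+1) (j+1) :=
        gauss_pascal2 (2*N+1) j
      have hg3 : gauss (2*N+2) (j+2) = X^(2*N-j) * gauss (2*N+1) (j+1) + gauss (2*N+1) (j+2) := by
        have := gauss_pascal2 (2*N+1) (j+1)
        rwa [show 2*N+1-(j+1) = 2*N-j from by omega] at this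
      have hG : gauss (2*N+3) (j+2) = X^(2*N+1-j) * gauss (2*N+1) j + gauss (2*N+1) (j+1)
          + X^(j+2) * X^(2*N-j) * gauss (2*N+1) (j+1) + X^(j+2) * gauss (2*N+1) (j+2) := by
        rw [hg1, hg2, hg3]; ring
      have e1 : (X : Polynomial ℤ)^(triZ (j+2) (N+1)) = X^(triZ (j+1) N) := by
        rw [show triZ (j+2) (N+1) = triZ (j+1) N from by
          have := triZ_a (j+2) N (by omega); simpa using this]
      have e2 : (X : Polynomial ℤ)^(triZ (j+2) (N+1)) * X^(j+2) = X^(triZ (j+2) N) * X^(N+1) := by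
        rw [← pow_add, ← pow_add]; congr 1
        have := triZ_b (j+2) N; omega
      have e3 : (X : Polynomial ℤ)^(triZ (j+2) (N+1)) * X^(2*N+1-j) = X^(triZ j N) * X^(N+1) := by
        rw [← pow_add, ← pow_add]; congr 1
        have := triZ_c (j+2) N (by omega) (by omega)
        have hs : j+2-2 = j := by omega
        rw [hs] at this
        omega
      rcases Nat.lt_or_ge j (2*N+1) with hj2 | hj2
      · -- j ≤ 2N, main case
        have e4 : (X : Polynomial ℤ)^(j+2) * X^(2*N-j) = X^(2*N+2) := by
          rw [← pow_add]; congr 1; omega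
        linear_combination (X:Polynomial ℤ)^(triZ (j+2) (N+1)) * hG
          + gauss (2*N+1) j * e3 + gauss (2*N+1) (j+2) * e2
          + gauss (2*N+1) (j+1) * e1
          + gauss (2*N+1) (j+1) * (X:Polynomial ℤ)^(triZ (j+2) (N+1)) * e4
          + gauss (2*N+1) (j+1) * (X:Polynomial ℤ)^(2*N+2) * e1
      · -- j = 2N+1
        have hj : j = 2*N+1 := by omega
        subst hj
        have hz1 : gauss (2*N+1) (2*N+1+1) = 0 := gauss_eq_zero _ _ (by omega)
        have hz2 : gauss (2*N+1) (2*N+1+2) = 0 := gauss_eq_zero _ _ (by omega)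
        have hs1 : gauss (2*N+3) (2*N+1+2) = 1 := by
          rw [show 2*N+1+2 = 2*N+3 from by omega, gauss_self]
        have hs2 : gauss (2*N+1) (2*N+1) = 1 := gauss_self _
        rw [Nat.sub_self, pow_zero, mul_one] at e3
        rw [hs1, hz1, hz2, hs2]
        linear_combination e3

/-- The shifted finite q-binomial theorem. -/
theorem identA (N : ℕ) :
    (∏ j ∈ range N, (1 + C ((X:Polynomial ℤ)^(j+1)) * X)) *
      (∏ j ∈ range (N+1), (X + C ((X:Polynomial ℤ)^j))) = sGF N := by
  induction N with
  | zero =>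
    rw [Finset.prod_range_zero, Finset.prod_range_one, one_mul]
    rw [sGF]
    rw [Finset.sum_range_succ, Finset.sum_range_one]
    have h0 : cq 0 0 = 1 := by
      rw [cq, show (2*0+1) = 1 from rfl, gauss_zero_right,
        show triZ 0 0 = 0 from rfl]
      ring
    have h1 : cq 0 1 = 1 := by
      rw [cq, show (2*0+1) = 1 from rfl, gauss_self, show triZ 1 0 = 0 from rfl]
      ring
    rw [h0, h1]
    simp only [pow_zero, pow_one, map_one]
    ring
  | succ N ih =>
    rw [Finset.prod_range_succ, Finset.prod_range_succ (f := fun j => X + C ((X:Polynomial ℤ)^j))]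
    have hre : (∏ j ∈ range N, (1 + C ((X:Polynomial ℤ)^(j+1)) * X)) *
        (1 + C ((X:Polynomial ℤ)^(N+1)) * X) *
        ((∏ j ∈ range (N+1), (X + C ((X:Polynomial ℤ)^j))) * (X + C ((X:Polynomial ℤ)^(N+1))))
        = sGF N * ((1 + C ((X:Polynomial ℤ)^(N+1)) * X) * (X + C ((X:Polynomial ℤ)^(N+1)))) := by
      rw [← ih]; ring
    rw [hre]
    -- now prove sGF N * M = sGF (N+1) coefficientwise
    have hCC : (C ((X:Polynomial ℤ)^(N+1)) : Polynomial (Polynomial ℤ)) * C ((X:Polynomial ℤ)^(N+1))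
        = C ((X:Polynomial ℤ)^(2*N+2)) := by
      rw [← C_mul, ← pow_add]
      congr 2
      omega
    have hSM : sGF N * ((1 + C ((X:Polynomial ℤ)^(N+1)) * X) * (X + C ((X:Polynomial ℤ)^(N+1))))
        = sGF N * C ((X:Polynomial ℤ)^(N+1))
          + (sGF N * (1 + C ((X:Polynomial ℤ)^(2*N+2)))) * X^1
          + (sGF N * C ((X:Polynomial ℤ)^(N+1))) * X^2 := by
      linear_combination (sGF N) * X * hCC
    rw [hSM]
    ext j : 1
    rw [Polynomial.coeff_add, Polynomial.coeff_add]
    rw [Polynomial.coeff_mul_C, Polynomial.coeff_mul_X_pow', Polynomial.coeff_mul_X_pow']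
    rw [sGF_coeff, sGF_coeff]
    have hmid : ∀ i : ℕ, (sGF N * (1 + C ((X:Polynomial ℤ)^(2*N+2)))).coeff i
        = cq N i + cq N i * X^(2*N+2) := by
      intro i
      rw [mul_add, mul_one, Polynomial.coeff_add, Polynomial.coeff_mul_C, sGF_coeff]
    have hstep := cstep N j
    rw [hstep]
    by_cases h1 : 1 ≤ j
    · rw [if_pos h1, if_pos h1, hmid]
      by_cases h2 : 2 ≤ j
      · rw [if_pos h2, if_pos h2, Polynomial.coeff_mul_C, sGF_coeff]
      · rw [if_neg h2, if_neg h2]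
    · rw [if_neg h1, if_neg h1, if_neg (by omega), if_neg (by omega)]

/-! ### The finite Jacobi identity -/

lemma sum_split (L : ℕ) (f : ℕ → Polynomial (Polynomial ℤ)) :
    ∑ m ∈ range (2*L+2), f m
      = ∑ k ∈ range (L+1), f (L-k) + ∑ k ∈ range (L+1), f (L+1+k) := by
  have h1 : ∑ m ∈ Finset.Ico 0 (L+1), f m + ∑ m ∈ Finset.Ico (L+1) (2*L+2), f m
      = ∑ m ∈ Finset.Ico 0 (2*L+2), f m :=
    Finset.sum_Ico_consecutive f (by omega) (by omega)
  rw [← Finset.range_eq_Ico] at h1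
  rw [Finset.sum_Ico_eq_sum_range] at h1
  rw [show 2*L+2-(L+1) = L+1 from by omega] at h1
  have h3 : ∑ k ∈ range (L+1), f (L-k) = ∑ k ∈ range (L+1), f k := by
    have := Finset.sum_range_reflect f (L+1)
    simpa using this
  rw [h3]
  rw [← Finset.range_eq_Ico] at h1
  exact h1.symm

theorem identJ (N : ℕ) :
    poch N ^ 2 = ∑ k ∈ range (N+1),
      Polynomial.C ((-1)^k * (2*(k:ℤ)+1)) * gauss (2*N+1) (N-k) * X^(tk k) := by
  -- apply x ↦ -x to identA
  have hA := identA N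
  have happ := congrArg (Polynomial.aeval (-X : Polynomial (Polynomial ℤ))) hA
  rw [map_mul, map_prod, map_prod, sGF, map_sum] at happ
  have hL1 : ∀ j ∈ range N, (Polynomial.aeval (-X : Polynomial (Polynomial ℤ)))
      (1 + C ((X:Polynomial ℤ)^(j+1)) * X) = 1 - C ((X:Polynomial ℤ)^(j+1)) * X := by
    intro j _
    rw [map_add, map_mul, map_one, Polynomial.aeval_C, Polynomial.aeval_X,
      Polynomial.algebraMap_eq]
    ring
  have hL2 : ∀ j ∈ range (N+1), (Polynomial.aeval (-X : Polynomial (Polynomial ℤ)))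
      (X + C ((X:Polynomial ℤ)^j)) = C ((X:Polynomial ℤ)^j) - X := by
    intro j _
    rw [map_add, Polynomial.aeval_C, Polynomial.aeval_X, Polynomial.algebraMap_eq]
    ring
  rw [Finset.prod_congr rfl hL1, Finset.prod_congr rfl hL2] at happ
  have hR : ∀ m ∈ range (2*N+2), (Polynomial.aeval (-X : Polynomial (Polynomial ℤ)))
      (C (cq N m) * X^m) = (-1)^m * C (cq N m) * X^m := by
    intro m _
    rw [map_mul, map_pow, Polynomial.aeval_C, Polynomial.aeval_X, Polynomial.algebraMap_eq]
    ring
  rw [Finset.sum_congr rfl hR] at happ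
  -- peel off the j = 0 factor on the left
  rw [Finset.prod_range_succ'] at happ
  rw [pow_zero, map_one] at happ
  -- pair up the sum on the right
  rw [sum_split N (fun m => (-1)^m * C (cq N m) * X^m)] at happ
  have hpair : ∀ k ∈ range (N+1),
      (-1)^(N-k) * C (cq N (N-k)) * X^(N-k) + (-1)^(N+1+k) * C (cq N (N+1+k)) * X^(N+1+k)
      = (1 - X) * ((-1)^(N-k) * C (gauss (2*N+1) (N-k) * X^(tk k)) * X^(N-k) *
          (∑ i ∈ range (2*k+1), X^i)) := by
    intro k hk
    rw [Finset.mem_range] at hk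
    have hk' : k ≤ N := by omega
    have hc1 : cq N (N-k) = gauss (2*N+1) (N-k) * X^(tk k) := by
      rw [cq, triZ_low N k hk']
    have hc2 : cq N (N+1+k) = gauss (2*N+1) (N-k) * X^(tk k) := by
      rw [cq, triZ_high N k, gauss_symm (2*N+1) (N-k) (by omega),
        show 2*N+1-(N-k) = N+1+k from by omega]
    have hsgn : (-1 : Polynomial (Polynomial ℤ))^(N+1+k) = -(-1)^(N-k) := by
      rw [show N+1+k = (N-k) + (2*k+1) from by omega, pow_add]
      have h2k : Odd (2*k+1) := by rw [Nat.odd_iff]; omega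
      rw [Odd.neg_one_pow (α := Polynomial (Polynomial ℤ)) h2k]
      ring
    have hxp : (X : Polynomial (Polynomial ℤ))^(N+1+k) = X^(N-k) * X^(2*k+1) := by
      rw [← pow_add]; congr 1; omega
    have hgeo : (1 - X : Polynomial (Polynomial ℤ)) * ∑ i ∈ range (2*k+1), X^i
        = 1 - X^(2*k+1) := by
      have := geom_sum_mul (X : Polynomial (Polynomial ℤ)) (2*k+1)
      linear_combination -this
    rw [hc1, hc2, hsgn, hxp]
    linear_combination (-((-1:Polynomial (Polynomial ℤ))^(N-k) * C (gauss (2*N+1) (N-k)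
      * X^(tk k)) * X^(N-k))) * hgeo
  rw [Finset.sum_add_distrib.symm] at happ
  rw [Finset.sum_congr rfl hpair, ← Finset.mul_sum] at happ
  -- cancel the factor (1 - X)
  have hcancel : (∏ j ∈ range N, (1 - C ((X:Polynomial ℤ)^(j+1)) * X)) *
      (∏ j ∈ range N, (C ((X:Polynomial ℤ)^(j+1)) - X))
      = ∑ k ∈ range (N+1), ((-1)^(N-k) * C (gauss (2*N+1) (N-k) * X^(tk k)) * X^(N-k) *
          (∑ i ∈ range (2*k+1), X^i)) := by
    have hne : (1 - X : Polynomial (Polynomial ℤ)) ≠ 0 := by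
      intro h
      have := congrArg (fun p => Polynomial.coeff p 1) h
      simp [Polynomial.coeff_one] at this
    apply mul_left_cancel₀ hne
    calc (1-X) * ((∏ j ∈ range N, (1 - C ((X:Polynomial ℤ)^(j+1)) * X)) *
        (∏ j ∈ range N, (C ((X:Polynomial ℤ)^(j+1)) - X)))
        = (∏ j ∈ range N, (1 - C ((X:Polynomial ℤ)^(j+1)) * X)) *
          ((∏ j ∈ range N, (C ((X:Polynomial ℤ)^(j+1)) - X)) * (1 - X)) := by ring
      _ = _ := by rw [happ]
  -- evaluate at x = 1
  have hev := congrArg (Polynomial.eval (1 : Polynomial ℤ)) hcancel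
  rw [Polynomial.eval_mul, Polynomial.eval_prod, Polynomial.eval_prod,
    Polynomial.eval_finset_sum] at hev
  have hv1 : ∀ j ∈ range N, Polynomial.eval (1 : Polynomial ℤ)
      (1 - C ((X:Polynomial ℤ)^(j+1)) * X) = 1 - X^(j+1) := by
    intro j _; simp
  have hv2 : ∀ j ∈ range N, Polynomial.eval (1 : Polynomial ℤ)
      (C ((X:Polynomial ℤ)^(j+1)) - X) = (-1) * (1 - X^(j+1)) := by
    intro j _; simp
  rw [Finset.prod_congr rfl hv1, Finset.prod_congr rfl hv2, Finset.prod_mul_distrib,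
    Finset.prod_const, Finset.card_range] at hev
  have hv3 : ∀ k ∈ range (N+1), Polynomial.eval (1 : Polynomial ℤ)
      ((-1)^(N-k) * C (gauss (2*N+1) (N-k) * X^(tk k)) * X^(N-k) *
        (∑ i ∈ range (2*k+1), X^i))
      = (-1:Polynomial ℤ)^(N-k) * (2*((k:ℤ):Polynomial ℤ)+1) * (gauss (2*N+1) (N-k) * X^(tk k)) := by
    intro k _
    rw [Polynomial.eval_mul, Polynomial.eval_mul, Polynomial.eval_mul,
      Polynomial.eval_pow, Polynomial.eval_pow, Polynomial.eval_neg, Polynomial.eval_one,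
      Polynomial.eval_X, Polynomial.eval_C, Polynomial.eval_finset_sum]
    have : ∀ i ∈ range (2*k+1), Polynomial.eval (1:Polynomial ℤ) (X^i) = 1 := by
      intro i _; simp
    rw [Finset.sum_congr rfl this, Finset.sum_const, Finset.card_range]
    push_cast
    ring
  rw [Finset.sum_congr rfl hv3] at hev
  -- multiply by (-1)^N
  have hfin := congrArg (fun p => (-1:Polynomial ℤ)^N * p) hev
  simp only [Finset.mul_sum] at hfin
  have hterm : ∀ k ∈ range (N+1), (-1:Polynomial ℤ)^N * ((-1:Polynomial ℤ)^(N-k) * (2*((k:ℤ):Polynomial ℤ)+1) *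
      (gauss (2*N+1) (N-k) * X^(tk k)))
      = Polynomial.C ((-1)^k * (2*(k:ℤ)+1)) * gauss (2*N+1) (N-k) * X^(tk k) := by
    intro k hk
    rw [Finset.mem_range] at hk
    have hsgn : (-1:Polynomial ℤ)^N * (-1)^(N-k) = (-1)^k := by
      rw [← pow_add, show N + (N-k) = 2*(N-k) + k from by omega, pow_add, pow_mul]
      norm_num
    have hC : (Polynomial.C ((-1)^k * (2*(k:ℤ)+1)) : Polynomial ℤ)
        = (-1)^k * (2*(k:ℤ)+1) := by
      rw [map_mul, map_pow, map_neg, map_one]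
      norm_num
    rw [hC]
    linear_combination (2*((k:ℤ):Polynomial ℤ)+1) * (gauss (2*N+1) (N-k) * X^(tk k)) * hsgn
  rw [Finset.sum_congr rfl hterm] at hfin
  rw [← hfin]
  have hone : ((-1:Polynomial ℤ)^N) * ((-1)^N) = 1 := by
    rw [← pow_add, show N+N = 2*N from by omega, pow_mul]
    norm_num
  simp only [poch]
  linear_combination (-((∏ j ∈ range N, (1 - (X:Polynomial ℤ)^(j+1)))^2)) * hone

/-! ### The finite pentagonal identity -/

lemma QQ_poch (N : ℕ) :
    (1-X) * (∏ j ∈ range N, ((1 - X^(3*j+2)) * (1 - X^(3*j+4)))) *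
      Polynomial.expand ℤ 3 (poch N) = poch (3*N+1) := by
  induction N with
  | zero =>
    rw [Finset.prod_range_zero, poch_zero, map_one]
    rw [show 3*0+1 = 1 from rfl, show (1:ℕ) = 0 + 1 from rfl, poch_succ, poch_zero]
    ring
  | succ N ih =>
    rw [Finset.prod_range_succ, poch_succ, map_mul]
    have he : Polynomial.expand ℤ 3 (1 - X^(N+1)) = 1 - (X:Polynomial ℤ)^(3*N+3) := by
      rw [map_sub, map_one, map_pow, Polynomial.expand_X, ← pow_mul,
        show 3*(N+1) = 3*N+3 from by omega]
    have hp : poch (3*(N+1)+1) = poch (3*N+1) * (1 - X^(3*N+2)) * (1 - X^(3*N+3))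
        * (1 - X^(3*N+4)) := by
      rw [show 3*(N+1)+1 = (3*N+3)+1 from by omega, poch_succ,
        show 3*N+3 = (3*N+2)+1 from by omega, poch_succ,
        show 3*N+2 = (3*N+1)+1 from by omega, poch_succ]
      all_goals ring
    rw [he, hp, ← ih]
    ring

theorem identP (N : ℕ) :
    X^N * poch (3*N+1) = ∑ m ∈ range (2*N+2),
      (-1:Polynomial ℤ)^(N+m) * (Polynomial.expand ℤ 3 (gauss (2*N+1) m * poch N))
        * X^(3*triZ m N + m) := by
  have hA := identA N
  set Φ := Polynomial.eval₂RingHom ((Polynomial.expand ℤ 3 : Polynomial ℤ →ₐ[ℤ] Polynomial ℤ)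
    : Polynomial ℤ →+* Polynomial ℤ) (-X : Polynomial ℤ) with hΦ
  have happ := congrArg Φ hA
  rw [map_mul, map_prod, map_prod, sGF, map_sum] at happ
  have hΦC : ∀ p : Polynomial ℤ, Φ (C p) = Polynomial.expand ℤ 3 p := by
    intro p; rw [hΦ]; simp
  have hΦX : Φ X = -X := by rw [hΦ]; simp
  have hL1 : ∀ j ∈ range N, Φ (1 + C ((X:Polynomial ℤ)^(j+1)) * X) = 1 - X^(3*j+4) := by
    intro j _
    rw [map_add, map_mul, map_one, hΦC, hΦX, map_pow, Polynomial.expand_X, ← pow_mul]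
    rw [show 3*(j+1) = 3*j+3 from by omega]
    have : (X:Polynomial ℤ)^(3*j+3) * X = X^(3*j+4) := by
      rw [← pow_succ]
    linear_combination -this
  have hL2 : ∀ j ∈ range (N+1), Φ (X + C ((X:Polynomial ℤ)^j)) = X^(3*j) - X := by
    intro j _
    rw [map_add, hΦC, hΦX, map_pow, Polynomial.expand_X, ← pow_mul]
    ring
  rw [Finset.prod_congr rfl hL1, Finset.prod_congr rfl hL2] at happ
  have hR : ∀ m ∈ range (2*N+2), Φ (C (cq N m) * X^m)
      = (-1:Polynomial ℤ)^m * (Polynomial.expand ℤ 3 (gauss (2*N+1) m)) * X^(3*triZ m N + m) := by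
    intro m _
    rw [map_mul, map_pow, hΦC, hΦX, cq, map_mul, map_pow, Polynomial.expand_X, ← pow_mul]
    rw [pow_add]
    rw [show 3*(triZ m N) = (triZ m N)*3 from by omega]
    ring
  rw [Finset.sum_congr rfl hR] at happ
  -- reshape the second product
  rw [Finset.prod_range_succ'] at happ
  have h30 : (X:Polynomial ℤ)^(3*0) - X = 1 - X := by norm_num
  rw [h30] at happ
  have hsp : ∀ j ∈ range N, (X:Polynomial ℤ)^(3*(j+1)) - X = (-X) * (1 - X^(3*j+2)) := by
    intro j _
    have : (X:Polynomial ℤ) * X^(3*j+2) = X^(3*(j+1)) := by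
      rw [← pow_succ', show (3*j+2)+1 = 3*(j+1) from by omega]
    linear_combination -this
  rw [Finset.prod_congr rfl hsp, Finset.prod_mul_distrib, Finset.prod_const,
    Finset.card_range] at happ
  -- multiply by (-1)^N * expand3 (poch N)
  have hmul := congrArg (fun p => ((-1:Polynomial ℤ)^N * Polynomial.expand ℤ 3 (poch N)) * p) happ
  simp only [Finset.mul_sum] at hmul
  have hneg : (-X : Polynomial ℤ)^N = (-1)^N * X^N := by
    rw [neg_pow]
  have hQ : ((-1:Polynomial ℤ)^N * Polynomial.expand ℤ 3 (poch N)) *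
      ((∏ j ∈ range N, (1 - X^(3*j+4))) * (((-X)^N * ∏ j ∈ range N, (1 - X^(3*j+2))) * (1-X)))
      = X^N * poch (3*N+1) := by
    rw [hneg, ← QQ_poch N]
    have hone : ((-1:Polynomial ℤ)^N) * ((-1)^N) = 1 := by
      rw [← pow_add, show N+N = 2*N from by omega, pow_mul]
      norm_num
    rw [Finset.prod_mul_distrib]
    linear_combination (X^N * Polynomial.expand ℤ 3 (poch N) * (∏ j ∈ range N, (1 - (X:Polynomial ℤ)^(3*j+2)))
      * (∏ j ∈ range N, (1 - (X:Polynomial ℤ)^(3*j+4))) * (1-X)) * hone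
  rw [hQ] at hmul
  rw [hmul]
  refine Finset.sum_congr rfl ?_
  intro m _
  rw [map_mul, pow_add]
  ring

end EulerDev

open PowerSeries Finset

/-- The Euler product `(q;q)_∞ = ∏_{m≥1} (1 - q^m)` as a formal power series over `ℤ`. -/
noncomputable def eulerProd : PowerSeries ℤ :=
  PowerSeries.mk fun n =>
    PowerSeries.coeff (R := ℤ) n (∏ k ∈ Finset.range (n + 1), (1 - (X : PowerSeries ℤ) ^ (1 + k)))

/-- The generating function `1/(q;q)_∞^k` of the generalized partition function `p_k`,
for `k ∈ ℤ` (the inverse is taken via `invOfUnit`, since `(q;q)_∞` has constant term 1). -/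
noncomputable def genPartGF (k : ℤ) : PowerSeries ℤ :=
  if 0 ≤ k then (PowerSeries.invOfUnit eulerProd 1) ^ k.toNat
  else eulerProd ^ (-k).toNat

/-! ### Bridging to power series -/

lemma coeff_mul_low_zero {R : Type*} [CommRing R] {D : ℕ} {a : PowerSeries R}
    (h : ∀ i ≤ D, PowerSeries.coeff (R := R) i a = 0) (b : PowerSeries R) :
    ∀ d ≤ D, PowerSeries.coeff (R := R) d (a * b) = 0 := by
  intro d hd
  rw [PowerSeries.coeff_mul]
  apply Finset.sum_eq_zero
  intro x hx
  rw [Finset.HasAntidiagonal.mem_antidiagonal] at hx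
  rw [h x.1 (by omega), zero_mul]

lemma coeff_pow_congr {R : Type*} [CommRing R] {D : ℕ} {f g : PowerSeries R}
    (h : ∀ i ≤ D, PowerSeries.coeff (R := R) i f = PowerSeries.coeff (R := R) i g) (r : ℕ) :
    ∀ d ≤ D, PowerSeries.coeff (R := R) d (f^r) = PowerSeries.coeff (R := R) d (g^r) := by
  intro d hd
  obtain ⟨c, hc⟩ := sub_dvd_pow_sub_pow f g r
  have h0 : ∀ i ≤ D, PowerSeries.coeff (R := R) i (f - g) = 0 := by
    intro i hi
    rw [map_sub, h i hi, sub_self]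
  have := coeff_mul_low_zero h0 c d hd
  rw [← hc, map_sub] at this
  rwa [sub_eq_zero] at this

lemma poch_coe (m : ℕ) : ((poch m : Polynomial ℤ) : PowerSeries ℤ)
    = ∏ k ∈ range m, (1 - (X : PowerSeries ℤ)^(1+k)) := by
  rw [poch, ← Polynomial.coeToPowerSeries.ringHom_apply, map_prod]
  refine Finset.prod_congr rfl ?_
  intro j _
  rw [Polynomial.coeToPowerSeries.ringHom_apply, Polynomial.coe_sub, Polynomial.coe_one,
    Polynomial.coe_pow, Polynomial.coe_X, show 1+j = j+1 from by omega]

lemma eulerProd_coeff (n M : ℕ) (h : n ≤ M) :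
    PowerSeries.coeff (R := ℤ) n eulerProd = (poch M).coeff n := by
  unfold eulerProd
  rw [PowerSeries.coeff_mk, ← poch_coe, Polynomial.coeff_coe]
  exact lowEqP_poch (by omega) (by omega) n (le_refl n)

lemma eulerProd_pow_coeff (r n M : ℕ) (h : n ≤ M) :
    PowerSeries.coeff (R := ℤ) n (eulerProd^r) = ((poch M)^r).coeff n := by
  have hlow : ∀ i ≤ n, PowerSeries.coeff (R := ℤ) i eulerProd
      = PowerSeries.coeff (R := ℤ) i ((poch M : Polynomial ℤ) : PowerSeries ℤ) := by
    intro i hi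
    rw [Polynomial.coeff_coe]
    exact eulerProd_coeff i M (by omega)
  have := coeff_pow_congr hlow r n (le_refl n)
  rw [this, ← Polynomial.coe_pow, Polynomial.coeff_coe]

/-! ### Window lemma with expand -/

lemma window_expand {a N m : ℕ} (hm : a ≤ m) (hm2 : a + m ≤ 2*N+1) (hN : a ≤ N) :
    ∀ e ≤ 3*a+2, (Polynomial.expand ℤ 3 (gauss (2*N+1) m * poch N)).coeff e
      = if e = 0 then 1 else 0 := by
  intro e he
  rw [Polynomial.coeff_expand (by omega : 0 < 3)]
  by_cases h3 : 3 ∣ e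
  · rw [if_pos h3]
    have he3 : e/3 ≤ a := by omega
    rw [windowOne hm hm2 hN (e/3) he3, Polynomial.coeff_one]
    by_cases h0 : e = 0
    · rw [if_pos h0, if_pos (by omega)]
    · rw [if_neg h0, if_neg (by omega)]
  · rw [if_neg h3, if_neg (by omega)]

/-! ### The two coefficient facts -/

lemma euler_aux (a : ℕ) (h : PowerSeries.coeff (R := ℤ) a eulerProd ≠ 0) :
    ∃ k : ℤ, 2*(a:ℤ) = k*(3*k-1) := by
  set N := 2*a+2 with hN
  have hbr : PowerSeries.coeff (R := ℤ) a eulerProd = (poch (3*N+1)).coeff a :=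
    eulerProd_coeff a (3*N+1) (by omega)
  have hPc := congrArg (fun p => Polynomial.coeff p (a+N)) (identP N)
  rw [mul_comm, Polynomial.coeff_mul_X_pow] at hPc
  rw [Polynomial.finset_sum_coeff] at hPc
  have hterm : ∀ m ∈ range (2*N+2),
      ((-1:Polynomial ℤ)^(N+m) * (Polynomial.expand ℤ 3 (gauss (2*N+1) m * poch N))
        * Polynomial.X^(3*triZ m N + m)).coeff (a+N)
      = (-1:ℤ)^(N+m) * (if 3*triZ m N + m = a+N then 1 else 0) := by
    intro m hmr
    rw [Finset.mem_range] at hmr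
    rw [Polynomial.coeff_mul_X_pow']
    by_cases hle : 3*triZ m N + m ≤ a+N
    · -- in the window
      have hwin1 : a ≤ m := by
        by_contra hcon
        push_neg at hcon
        have hmN : m ≤ N := by omega
        have htri : triZ m N = tk (N - m) := by
          have := triZ_low N (N - m) (by omega)
          rwa [show N - (N-m) = m from by omega] at this
        have : a + 3 ≤ tk (N - m) := le_trans (by omega) (tk_ge_self (N-m))
        omega
      have hwin2 : a + m ≤ 2*N+1 := by
        by_contra hcon
        push_neg at hcon
        have hmN : N+1 ≤ m := by omega
        have htri : triZ m N = tk (m - N - 1) := by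
          have := triZ_high N (m - N - 1)
          rwa [show N+1+(m-N-1) = m from by omega] at this
        have : a + 3 ≤ tk (m - N - 1) := le_trans (by omega) (tk_ge_self (m-N-1))
        omega
      rw [if_pos hle]
      have hC : ((-1:Polynomial ℤ)^(N+m)) = Polynomial.C ((-1:ℤ)^(N+m)) := by
        rw [map_pow, map_neg, map_one]
      rw [hC, Polynomial.coeff_C_mul]
      rw [window_expand hwin1 hwin2 (by omega) (a+N - (3*triZ m N + m)) (by omega)]
      by_cases heq : 3*triZ m N + m = a+N
      · rw [if_pos (by omega), if_pos heq]
      · rw [if_neg (by omega), if_neg heq]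
    · rw [if_neg hle, if_neg (by omega)]
      ring
  rw [Finset.sum_congr rfl hterm] at hPc
  rw [hbr, hPc] at h
  obtain ⟨m, hmr, hm0⟩ := Finset.exists_ne_zero_of_sum_ne_zero h
  have heq : 3*triZ m N + m = a+N := by
    by_contra hcon
    rw [if_neg hcon, mul_zero] at hm0
    exact hm0 rfl
  have hZ : 3*(trz ((m:ℤ) - N - 1)) + (m:ℤ) = (a:ℤ) + N := by
    have := congrArg (Nat.cast : ℕ → ℤ) heq
    push_cast at this
    rw [triZ_cast] at this
    have hNc : ((N:ℕ):ℤ) = 2*(a:ℤ)+2 := by rw [hN]; push_cast; ring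
    omega
  refine ⟨(m:ℤ) - N, ?_⟩
  have h6 := trz_eq ((m:ℤ) - N - 1)
  have h6' : 2 * trz ((m:ℤ) - N - 1) = ((m:ℤ) - N - 1) * ((m:ℤ) - N) := by
    rw [h6]; ring
  linear_combination (-2 : ℤ) * hZ + 3 * h6'

lemma jacobi_aux (b : ℕ) :
    PowerSeries.coeff (R := ℤ) b (eulerProd^3) = 0 ∨
      ∃ μ : ℕ, 2*b = μ*(μ+1) ∧ (2*(μ:ℤ)+1) ∣ PowerSeries.coeff (R := ℤ) b (eulerProd^3) := by
  set N := 2*b+2 with hN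
  have hbr : PowerSeries.coeff (R := ℤ) b (eulerProd^3) = ((poch N)^3).coeff b :=
    eulerProd_pow_coeff 3 b N (by omega)
  have hcube : (poch N)^3 = ∑ k ∈ range (N+1),
      (Polynomial.C ((-1)^k * (2*(k:ℤ)+1)) * (gauss (2*N+1) (N-k) * poch N))
        * Polynomial.X^(tk k) := by
    have h3 : (poch N)^3 = (poch N)^2 * poch N := by ring
    rw [h3, identJ N, Finset.sum_mul]
    refine Finset.sum_congr rfl ?_
    intro k _
    ring
  have hterm : ∀ k ∈ range (N+1),
      ((Polynomial.C ((-1)^k * (2*(k:ℤ)+1)) * (gauss (2*N+1) (N-k) * poch N))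
        * Polynomial.X^(tk k)).coeff b
      = (-1:ℤ)^k * (2*(k:ℤ)+1) * (if tk k = b then 1 else 0) := by
    intro k hkr
    rw [Finset.mem_range] at hkr
    rw [Polynomial.coeff_mul_X_pow']
    by_cases hle : tk k ≤ b
    · have hkb : k ≤ b := le_trans (tk_ge_self k) hle
      rw [if_pos hle, Polynomial.coeff_C_mul]
      rw [windowOne (show b ≤ N-k from by omega) (show b + (N-k) ≤ 2*N+1 from by omega)
        (show b ≤ N from by omega) (b - tk k) (by omega)]
      rw [Polynomial.coeff_one]
      by_cases heq : tk k = b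
      · rw [if_pos (by omega), if_pos heq]
      · rw [if_neg (by omega), if_neg heq]
    · rw [if_neg hle, if_neg (by omega)]
      ring
  have hco : ((poch N)^3).coeff b = ∑ k ∈ range (N+1),
      (-1:ℤ)^k * (2*(k:ℤ)+1) * (if tk k = b then 1 else 0) := by
    rw [hcube, Polynomial.finset_sum_coeff]
    exact Finset.sum_congr rfl hterm
  by_cases hex : ∃ μ ∈ range (N+1), tk μ = b
  · obtain ⟨μ, hμr, hμ⟩ := hex
    right
    have hsum : ((poch N)^3).coeff b = (-1:ℤ)^μ * (2*(μ:ℤ)+1) := by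
      rw [hco]
      rw [Finset.sum_eq_single_of_mem μ hμr]
      · rw [if_pos hμ, mul_one]
      · intro k _ hk
        rw [if_neg (fun hc => hk (tk_strictMono.injective (hc.trans hμ.symm))), mul_zero]
    refine ⟨μ, ?_, ?_⟩
    · have := tk_eq μ
      omega
    · rw [hbr, hsum]
      exact ⟨(-1)^μ, by ring⟩
  · left
    push_neg at hex
    rw [hbr, hco]
    apply Finset.sum_eq_zero
    intro k hk
    rw [if_neg (hex k hk), mul_zero]

/-! ### Frobenius for power series over `ZMod p` -/

lemma frob_coeff (p : ℕ) [hp : Fact p.Prime] (f : PowerSeries (ZMod p)) (m : ℕ)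
    (hm : ¬ p ∣ m) : PowerSeries.coeff (R := (ZMod p)) m (f^p) = 0 := by
  set T := PowerSeries.trunc (m+1) f with hT
  have hlow : ∀ i ≤ m, PowerSeries.coeff (R := (ZMod p)) i f
      = PowerSeries.coeff (R := (ZMod p)) i ((T : Polynomial (ZMod p)) : PowerSeries (ZMod p)) := by
    intro i hi
    rw [Polynomial.coeff_coe, hT, PowerSeries.coeff_trunc, if_pos (by omega)]
  have h1 := coeff_pow_congr hlow p m (le_refl m)
  rw [h1, ← Polynomial.coe_pow, Polynomial.coeff_coe]
  have h2 : T^p = Polynomial.expand (ZMod p) p T := by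
    have h3 := Polynomial.map_frobenius_expand p T
    rw [ZMod.frobenius_zmod, Polynomial.map_id] at h3
    exact h3.symm
  rw [h2, Polynomial.coeff_expand hp.out.pos, if_neg hm]

/-! ### `-3` is not a square mod `ω` when `ω ≡ 5 (mod 6)` -/

lemma no_sqrt_neg_three (ω : ℕ) (hω : Nat.Prime ω) (hω6 : ω % 6 = 5) (s : ZMod ω) :
    s^2 ≠ -3 := by
  intro hs
  haveI := Fact.mk hω
  have hω5 : 5 ≤ ω := by omega
  have hnd : ∀ c : ℕ, 0 < c → c < ω → (c : ZMod ω) ≠ 0 := by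
    intro c hc1 hc2 h0
    have hd := (ZMod.natCast_eq_zero_iff c ω).mp h0
    have := Nat.le_of_dvd hc1 hd
    omega
  have h2 : (2 : ZMod ω) ≠ 0 := by
    have := hnd 2 (by omega) (by omega)
    simpa using this
  have h3 : (3 : ZMod ω) ≠ 0 := by
    have := hnd 3 (by omega) (by omega)
    simpa using this
  have h4 : (4 : ZMod ω) ≠ 0 := by
    have := hnd 4 (by omega) (by omega)
    simpa using this
  set t := (s - 1) * (2 : ZMod ω)⁻¹ with htdef
  have h2t : 2 * t = s - 1 := by
    rw [htdef]
    field_simp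
  have hq : 4 * (t^2 + t + 1) = 0 := by
    linear_combination (2*t + s + 1) * h2t + hs
  have ht : t^2 + t + 1 = 0 := by
    rcases mul_eq_zero.mp hq with h | h
    · exact absurd h h4
    · exact h
  have ht3 : t^3 = 1 := by linear_combination (t - 1) * ht
  have htne1 : t ≠ 1 := by
    intro h1
    rw [h1] at ht
    have : (3 : ZMod ω) = 0 := by linear_combination ht
    exact h3 this
  have htne0 : t ≠ 0 := by
    intro h0
    rw [h0] at ht3
    simp at ht3
  have hord3 : orderOf t = 3 := by
    have hdvd : orderOf t ∣ 3 := orderOf_dvd_of_pow_eq_one ht3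
    rcases (Nat.Prime.eq_one_or_self_of_dvd (by norm_num) _ hdvd) with h | h
    · exact absurd (orderOf_eq_one_iff.mp h) htne1
    · exact h
  have hferm : t^(ω-1) = 1 := ZMod.pow_card_sub_one_eq_one htne0
  have hdvd : 3 ∣ ω - 1 := hord3 ▸ orderOf_dvd_of_pow_eq_one hferm
  omega

/-! ### The key divisibility -/

lemma keyE (ω : ℕ) (hω : Nat.Prime ω) (hω6 : ω % 6 = 5) (i : ℕ)
    (hdiv : (ω:ℤ) ∣ 6*(i:ℤ)+1) :
    (ω:ℤ) ∣ PowerSeries.coeff (R := ℤ) i (eulerProd^4) := by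
  have h4 : eulerProd^4 = eulerProd * eulerProd^3 := by ring
  rw [h4, PowerSeries.coeff_mul]
  apply Finset.dvd_sum
  intro x hx
  rw [Finset.HasAntidiagonal.mem_antidiagonal] at hx
  by_cases hE : PowerSeries.coeff (R := ℤ) x.1 eulerProd = 0
  · rw [hE, zero_mul]
    exact dvd_zero _
  rcases jacobi_aux x.2 with hJ | ⟨μ, hμ, hdvdμ⟩
  · rw [hJ, mul_zero]
    exact dvd_zero _
  obtain ⟨k, hk⟩ := euler_aux x.1 hE
  have key : (ω:ℤ) ∣ 2*(μ:ℤ)+1 := by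
    by_contra hcon
    haveI := Fact.mk hω
    have hμc : 2*(x.2:ℤ) = (μ:ℤ)*((μ:ℤ)+1) := by exact_mod_cast hμ
    have hxc : (x.1:ℤ) + (x.2:ℤ) = (i:ℤ) := by exact_mod_cast hx
    have hZ : (6*k-1)^2 + 3*(2*(μ:ℤ)+1)^2 = 4*(6*(i:ℤ)+1) := by
      linear_combination (-12 : ℤ)*hk + (-12 : ℤ)*hμc + 24*hxc
    have h0 : ((6*(i:ℤ)+1 : ℤ) : ZMod ω) = 0 :=
      (ZMod.intCast_zmod_eq_zero_iff_dvd _ _).mpr hdiv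
    have hsq : ((6*k-1 : ℤ) : ZMod ω)^2 + 3*((2*(μ:ℤ)+1 : ℤ) : ZMod ω)^2 = 0 := by
      have hc := congrArg (Int.cast : ℤ → ZMod ω) hZ
      push_cast at hc h0 ⊢
      rw [hc]
      linear_combination (4 : ZMod ω) * h0
    set y := ((2*(μ:ℤ)+1 : ℤ) : ZMod ω) with hy
    have hyne : y ≠ 0 := by
      rw [hy]
      intro h0'
      exact hcon ((ZMod.intCast_zmod_eq_zero_iff_dvd _ _).mp h0')
    have hy2 : y^2 * (y⁻¹)^2 = 1 := by
      field_simp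
    have hs : (((6*k-1 : ℤ) : ZMod ω) * y⁻¹)^2 = -3 := by
      linear_combination (y⁻¹)^2 * hsq + (-3 : ZMod ω) * hy2
    exact no_sqrt_neg_three ω hω hω6 _ hs
  calc (ω:ℤ) ∣ 2*(μ:ℤ)+1 := key
    _ ∣ PowerSeries.coeff (R := ℤ) x.2 (eulerProd^3) := hdvdμ
    _ ∣ PowerSeries.coeff (R := ℤ) x.1 eulerProd * PowerSeries.coeff (R := ℤ) x.2 (eulerProd^3) :=
        dvd_mul_left _ _

/-! ### Main theorem -/

/-- If `ω` is a prime with `ω ≡ 5 (mod 6)`, `δ ∈ ℤ`, and `n ≥ 1`, then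
`p_{δω-4}(nω - (ω+1)/6) ≡ 0 (mod ω)`. -/
theorem genPart_congruence_mod_omega (ω : ℕ) (hω : Nat.Prime ω) (hω6 : ω % 6 = 5)
    (δ : ℤ) (n : ℕ) (hn : 1 ≤ n) :
    (ω : ℤ) ∣ PowerSeries.coeff (R := ℤ) (n * ω - (ω + 1) / 6) (genPartGF (δ * ω - 4)) := by
  haveI := Fact.mk hω
  set R := ZMod ω with hR
  set φ := Int.castRingHom R with hφ
  set w := (ω + 1) / 6 with hwdef
  have hw6 : 6 * w = ω + 1 := by omega
  set Nn := n * ω - w with hNndef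
  -- the unit E = image of eulerProd
  have hconst : PowerSeries.constantCoeff (R := ℤ) eulerProd = 1 := by
    rw [← PowerSeries.coeff_zero_eq_constantCoeff]
    rw [eulerProd_coeff 0 0 (le_refl 0), poch_coeff_zero]
  have hmulinv : eulerProd * PowerSeries.invOfUnit eulerProd 1 = 1 :=
    PowerSeries.mul_invOfUnit eulerProd 1 (by rw [hconst]; rfl)
  set E := PowerSeries.map φ eulerProd with hE
  set Einv := PowerSeries.map φ (PowerSeries.invOfUnit eulerProd 1) with hEinv
  have hEmul : E * Einv = 1 := by
    rw [hE, hEinv, ← map_mul, hmulinv, map_one]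
  set u : (PowerSeries R)ˣ := Units.mkOfMulEqOne E Einv hEmul with hu
  have huval : (u : PowerSeries R) = E := rfl
  have huinv : ((u⁻¹ : (PowerSeries R)ˣ) : PowerSeries R) = Einv := rfl
  -- image of genPartGF
  have hgen : ∀ k : ℤ, PowerSeries.map φ (genPartGF k)
      = ((u ^ (-k) : (PowerSeries R)ˣ) : PowerSeries R) := by
    intro k
    unfold genPartGF
    split_ifs with h
    · rw [map_pow]
      have : u ^ (-k) = (u⁻¹) ^ k.toNat := by
        rw [inv_pow, ← zpow_natCast, ← zpow_neg, Int.toNat_of_nonneg h]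
      rw [this, ← hEinv, ← huinv, ← Units.val_pow_eq_pow_val]
    · rw [map_pow]
      have : u ^ (-k) = u ^ (-k).toNat := by
        rw [← zpow_natCast, Int.toNat_of_nonneg (by omega)]
      rw [this, ← hE, ← huval, ← Units.val_pow_eq_pow_val]
  -- reduce to vanishing mod ω
  rw [← ZMod.intCast_zmod_eq_zero_iff_dvd]
  have hcm : ((PowerSeries.coeff (R := ℤ) Nn (genPartGF (δ * ω - 4)) : ℤ) : ZMod ω)
      = PowerSeries.coeff (R := R) Nn (PowerSeries.map φ (genPartGF (δ * ω - 4))) := by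
    rw [PowerSeries.coeff_map]
    rfl
  rw [hcm, hgen]
  -- split the unit power
  have hsplit : u ^ (-(δ * (ω:ℤ) - 4)) = u ^ (4:ℤ) * (u ^ (-δ)) ^ (ω:ℕ) := by
    rw [← zpow_natCast (u ^ (-δ)) ω, ← zpow_mul, ← zpow_add]
    congr 1
    ring
  rw [hsplit, Units.val_mul]
  have hval4 : ((u ^ (4:ℤ) : (PowerSeries R)ˣ) : PowerSeries R)
      = PowerSeries.map φ (eulerProd ^ 4) := by
    rw [show (4:ℤ) = ((4:ℕ):ℤ) from rfl, zpow_natCast, Units.val_pow_eq_pow_val, huval,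
      hE, map_pow]
  rw [hval4, Units.val_pow_eq_pow_val]
  set h := ((u ^ (-δ) : (PowerSeries R)ˣ) : PowerSeries R) with hh
  rw [PowerSeries.coeff_mul]
  apply Finset.sum_eq_zero
  intro x hx
  rw [Finset.HasAntidiagonal.mem_antidiagonal] at hx
  by_cases hdvd2 : ω ∣ x.2
  · -- first factor vanishes
    have hge : w ≤ n * ω := by
      have h1 : ω ≤ n * ω := Nat.le_mul_of_pos_left ω (by omega)
      omega
    have hNnadd : Nn + w = n * ω := by omega
    have hxZ : (x.1:ℤ) + (x.2:ℤ) = (Nn:ℤ) := by exact_mod_cast hx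
    have hNnZ : (Nn:ℤ) + (w:ℤ) = (n:ℤ) * (ω:ℤ) := by exact_mod_cast hNnadd
    have hwZ : 6 * (w:ℤ) = (ω:ℤ) + 1 := by exact_mod_cast hw6
    have h1 : 6*(x.1:ℤ) + 1 = (ω:ℤ)*(6*(n:ℤ)-1) - 6*(x.2:ℤ) := by
      linear_combination 6*hxZ + 6*hNnZ + (-1 : ℤ)*hwZ
    have hdvd1 : (ω:ℤ) ∣ 6*(x.1:ℤ)+1 := by
      rw [h1]
      exact dvd_sub (dvd_mul_right _ _)
        (Dvd.dvd.mul_left (Int.natCast_dvd_natCast.mpr hdvd2) 6)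
    have := keyE ω hω hω6 x.1 hdvd1
    rw [PowerSeries.coeff_map]
    have h0 : φ (PowerSeries.coeff (R := ℤ) x.1 (eulerProd^4)) = 0 := by
      rw [hφ]
      exact (ZMod.intCast_zmod_eq_zero_iff_dvd _ _).mpr this
    rw [h0, zero_mul]
  · -- second factor vanishes by Frobenius
    rw [frob_coeff ω h x.2 hdvd2, mul_zero]
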